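/- Fix d ≥ 2, arbitrary labels y_2,…,y_d ∈ {1,-1}, the test set Z_test = {(e_1,1)}, the training family Z_train = {(e_i, y_i) : i = 2,…,d} ∪ {(e_1,1), (-e_1,1)} of size n = d+1, and the target sample z_target = (e_1,1). Then for every θ ∈ ℝ^d, the influence of the target sample satisfies I_θ(z_target, Z_test) = -((d+1)/2)·exp(-θ_1); in particular I_θ(z_target, Z_test) < 0 for every θ ∈ ℝ^d. -/

import Mathlib

open Matrix
noncomputable section

/-- The sigmoid function `σ(t) = 1/(1+exp(-t))`. -/
def sigmoid (t : ℝ) : ℝ := 1 / (1 + Real.exp (-t))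

/-- A labeled sample `(x, y)` with `x ∈ ℝ^d` and label `y ∈ ℝ` (intended `y ∈ {1,-1}`). -/
abbrev Sample (d : ℕ) := (Fin d → ℝ) × ℝ

/-- Gradient in `θ` of the logistic loss `L((x,y),θ) = log(1+exp(-y⟨x,θ⟩))`,
namely `-y·σ(-y⟨x,θ⟩)·x`. -/
def lossGrad {d : ℕ} (z : Sample d) (θ : Fin d → ℝ) : Fin d → ℝ :=
  (-z.2 * sigmoid (-(z.2 * (z.1 ⬝ᵥ θ)))) • z.1

/-- Empirical-loss Hessian `H_θ = (1/n)·Σ_i σ(⟨x_i,θ⟩)σ(-⟨x_i,θ⟩)·x_i x_iᵀ`. -/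
def hess {d n : ℕ} (Ztrain : Fin n → Sample d) (θ : Fin d → ℝ) : Matrix (Fin d) (Fin d) ℝ :=
  (n : ℝ)⁻¹ • ∑ i, (sigmoid ((Ztrain i).1 ⬝ᵥ θ) * sigmoid (-((Ztrain i).1 ⬝ᵥ θ))) •
    vecMulVec (Ztrain i).1 (Ztrain i).1

/-- Influence of a training sample `z` on a test set `Ztest`:
`I_θ(z, Ztest) = Σ_j -g_{ztest_j}(θ)ᵀ H_θ⁻¹ g_z(θ)`. -/
def influence {d n m : ℕ} (Ztrain : Fin n → Sample d) (θ : Fin d → ℝ)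
    (z : Sample d) (Ztest : Fin m → Sample d) : ℝ :=
  ∑ j, -(lossGrad (Ztest j) θ ⬝ᵥ ((hess Ztrain θ)⁻¹ *ᵥ lossGrad z θ))


/-- The concrete training family of size `d+1`: index `0` is the target `(e_1, 1)`,
indices `1,...,d-1` are `(e_i, y_i)`, and index `d` is `(-e_1, 1)`. -/
def trainFam (d : ℕ) (hd : 0 < d) (y : Fin d → ℝ) (i : Fin (d + 1)) : Sample d :=
  if h : (i : ℕ) < d then
    if _h0 : (i : ℕ) = 0 then (Pi.single (⟨0, hd⟩ : Fin d) 1, 1)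
    else (Pi.single (⟨(i : ℕ), h⟩ : Fin d) 1, y ⟨(i : ℕ), h⟩)
  else (-Pi.single (⟨0, hd⟩ : Fin d) 1, 1)

/-- The concrete test set `Z_test = {(e_1, 1)}`. -/
def testFam (d : ℕ) (hd : 0 < d) : Fin 1 → Sample d :=
  fun _ => (Pi.single (⟨0, hd⟩ : Fin d) 1, 1)

lemma sigmoid_pos (t : ℝ) : 0 < sigmoid t := by unfold sigmoid; positivity

lemma sigmoid_neg_eq (t : ℝ) : sigmoid (-t) = Real.exp (-t) * sigmoid t := by
  unfold sigmoid
  rw [neg_neg]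
  have h1 : (0:ℝ) < 1 + Real.exp t := by positivity
  have h2 : (0:ℝ) < 1 + Real.exp (-t) := by positivity
  field_simp
  rw [add_mul, one_mul, ← Real.exp_add, add_neg_cancel, Real.exp_zero]
  ring

lemma vecMulVec_single (d : ℕ) (i : Fin d) :
    vecMulVec (Pi.single i (1:ℝ)) (Pi.single i 1) = diagonal (Pi.single i 1) := by
  ext a b
  simp [vecMulVec_apply, Pi.single_apply, diagonal]
  split_ifs <;> simp_all

lemma vecMulVec_neg_neg (d : ℕ) (u : Fin d → ℝ) :
    vecMulVec (-u) (-u) = vecMulVec u u := by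
  ext a b; simp [vecMulVec_apply]

lemma smul_diagonal_single (d : ℕ) (j : Fin d) (c : ℝ) :
    c • diagonal (Pi.single j (1:ℝ)) = diagonal (Pi.single j c) := by
  ext a b
  simp only [Matrix.smul_apply, smul_eq_mul, diagonal, Pi.single_apply, Matrix.of_apply]
  split_ifs <;> simp

lemma hess_trainFam (d : ℕ) (hd : 0 < d) (y : Fin d → ℝ) (θ : Fin d → ℝ) :
    hess (trainFam d hd y) θ = diagonal (fun k =>
      ((d : ℝ) + 1)⁻¹ * (sigmoid (θ k) * sigmoid (-θ k)
        + if k = (⟨0, hd⟩ : Fin d) then sigmoid (θ k) * sigmoid (-θ k) else 0)) := by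
  unfold hess
  have hcast : ∀ i : Fin d, trainFam d hd y i.castSucc =
      (Pi.single i (1:ℝ), if (i : ℕ) = 0 then 1 else y i) := by
    intro i
    unfold trainFam
    have h : ((i.castSucc : Fin (d+1)) : ℕ) < d := i.isLt
    rw [dif_pos h]
    by_cases h0 : (i : ℕ) = 0
    · rw [dif_pos (show ((i.castSucc : Fin (d+1)) : ℕ) = 0 from h0)]
      have : (⟨0, hd⟩ : Fin d) = i := by ext; exact h0.symm
      simp [this, h0]
    · rw [dif_neg (show ¬((i.castSucc : Fin (d+1)) : ℕ) = 0 from h0)]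
      simp [h0]
  have hlast : trainFam d hd y (Fin.last d) = (-Pi.single (⟨0, hd⟩ : Fin d) (1:ℝ), 1) := by
    unfold trainFam
    rw [dif_neg (by simp)]
  rw [Fin.sum_univ_castSucc]
  have hterm : ∀ i : Fin d,
      (sigmoid ((trainFam d hd y i.castSucc).1 ⬝ᵥ θ) *
        sigmoid (-((trainFam d hd y i.castSucc).1 ⬝ᵥ θ))) •
        vecMulVec (trainFam d hd y i.castSucc).1 (trainFam d hd y i.castSucc).1
      = diagonal (Pi.single i ((sigmoid (θ i) * sigmoid (-θ i)))) := by
    intro i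
    rw [hcast i]
    simp only [single_dotProduct, one_mul]
    rw [vecMulVec_single, smul_diagonal_single]
  simp only [hterm, hlast]
  rw [vecMulVec_neg_neg, vecMulVec_single]
  ext a b
  rcases eq_or_ne a b with rfl | hab
  · simp only [Matrix.smul_apply, Matrix.add_apply, Matrix.sum_apply,
      diagonal_apply_eq, neg_dotProduct, single_dotProduct, one_mul,
      neg_neg, smul_eq_mul]
    rw [Finset.sum_pi_single]
    simp only [Finset.mem_univ, if_true]
    push_cast
    rcases eq_or_ne a (⟨0, hd⟩ : Fin d) with rfl | h
    · simp only [Pi.single_eq_same, if_true]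
      ring
    · simp [Pi.single_apply, h]
  · simp only [Matrix.smul_apply, Matrix.add_apply, Matrix.sum_apply,
      diagonal_apply_ne _ hab, smul_eq_mul, mul_zero, add_zero]
    simp [diagonal_apply_ne _ hab]


/-- for every `θ`, the influence of the target sample `z_target = (e_1, 1)`
(on the test set `{(e_1,1)}`) equals `-((d+1)/2)·exp(-θ_1)`; in particular it is negative. -/
theorem influence_target_eq_neg (d : ℕ) (hd : 2 ≤ d) (y : Fin d → ℝ)
    (hy : ∀ i, y i = 1 ∨ y i = -1) (θ : Fin d → ℝ) :
    influence (trainFam d (by omega) y) θ (trainFam d (by omega) y 0) (testFam d (by omega)) =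
      -(((d : ℝ) + 1) / 2) * Real.exp (-θ ⟨0, by omega⟩) ∧
    influence (trainFam d (by omega) y) θ (trainFam d (by omega) y 0) (testFam d (by omega))
      < 0 := by
  have hd0 : 0 < d := by omega
  set i0 : Fin d := ⟨0, hd0⟩ with hi0
  set c : Fin d → ℝ := fun k => sigmoid (θ k) * sigmoid (-θ k) with hc
  set f : Fin d → ℝ := fun k => ((d : ℝ) + 1)⁻¹ * (c k + if k = i0 then c k else 0) with hf
  have hcpos : ∀ k, 0 < c k := fun k => mul_pos (sigmoid_pos _) (sigmoid_pos _)
  have hd1 : (0:ℝ) < (d:ℝ) + 1 := by positivity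
  have hfpos : ∀ k, 0 < f k := by
    intro k
    apply mul_pos (by positivity)
    have := hcpos k
    split_ifs <;> linarith
  have hH : hess (trainFam d hd0 y) θ = diagonal f := hess_trainFam d hd0 y θ
  have hinv : (hess (trainFam d hd0 y) θ)⁻¹ = diagonal (fun k => (f k)⁻¹) := by
    rw [hH]
    apply inv_eq_right_inv
    rw [diagonal_mul_diagonal]
    have : (fun k => f k * (f k)⁻¹) = fun _ => (1:ℝ) :=
      funext fun k => mul_inv_cancel₀ (hfpos k).ne'
    rw [this, diagonal_one]
  have htrain0 : trainFam d hd0 y 0 = (Pi.single i0 (1:ℝ), 1) := by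
    unfold trainFam
    rw [dif_pos (show ((0 : Fin (d+1)) : ℕ) < d by simp; omega)]
    rw [dif_pos (show ((0 : Fin (d+1)) : ℕ) = 0 by simp)]
  have hgrad : lossGrad (Pi.single i0 (1:ℝ), 1) θ = (-sigmoid (-θ i0)) • (Pi.single i0 1 : Fin d → ℝ) := by
    unfold lossGrad
    simp [single_dotProduct]
  have hval : influence (trainFam d hd0 y) θ (trainFam d hd0 y 0) (testFam d hd0) =
      -(((d : ℝ) + 1) / 2) * Real.exp (-θ i0) := by
    unfold influence testFam
    rw [Fin.sum_univ_one, htrain0, hgrad, hinv]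
    rw [mulVec_smul, diagonal_mulVec_single, smul_dotProduct, dotProduct_smul,
      single_dotProduct, Pi.single_eq_same]
    have hs : sigmoid (-θ i0) = Real.exp (-θ i0) * sigmoid (θ i0) := sigmoid_neg_eq _
    simp only [hf, hc, eq_self_iff_true, if_true]
    have hσ : 0 < sigmoid (θ i0) := sigmoid_pos _
    have hσ' : 0 < sigmoid (-θ i0) := sigmoid_pos _
    field_simp
    rw [hs]
    have he : Real.exp (-θ i0) ≠ 0 := (Real.exp_pos _).ne'
    have hσ0 : sigmoid (θ i0) ≠ 0 := hσ.ne'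
    simp only [smul_eq_mul]
    field_simp
    ring
  refine ⟨hval, ?_⟩
  rw [hval]
  have := Real.exp_pos (-θ i0)
  nlinarith
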